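/- An integer m appears exactly twice in Sada's sequence (s(n))_{n≥1} if and only if there exists k ≥ 1 such that m = ⌊kφ²⌋; equivalently, there exist indices 1 ≤ i < j with s(i) = s(j) = m if and only if m = ⌊kφ²⌋ for some k ≥ 1. -/

import Mathlib

/-- The golden ratio `(1 + √5)/2`. -/
noncomputable def phi : ℝ := (1 + Real.sqrt 5) / 2

/-- The Hurt-Sada array `A : ℕ → ℕ → ℕ`.  Row `0` is the identity sequence;
row `n+1` is obtained from row `n` by moving the entry `n+1` (located at the unique
position `p` with `A n p = n+1`) by `n+1` places to the right, shifting the jumped-over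
entries one place left. -/
noncomputable def A : ℕ → ℕ → ℕ
  | 0, k => k
  | n + 1, j =>
    let p := sInf {i | A n i = n + 1}
    if j < p then A n j
    else if j < p + (n + 1) then A n (j + 1)
    else if j = p + (n + 1) then n + 1
    else A n j

/-- `p n` is the (unique) position of `n` in row `n-1` of the Hurt-Sada array. -/
noncomputable def p (n : ℕ) : ℕ := sInf {i | A (n - 1) i = n}

/-- Sada's sequence: `s n` is the first element that `n` jumps over. -/
noncomputable def s (n : ℕ) : ℕ := A (n - 1) (p n + 1)


-- ===== auxiliary development =====

open goldenRatio in
lemma phi_eq : phi = Real.goldenRatio := rfl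

lemma phi_sq : phi ^ 2 = phi + 1 := by rw [phi_eq]; exact Real.goldenRatio_sq
lemma phi_gt_one : 1 < phi := by rw [phi_eq]; exact Real.one_lt_goldenRatio
lemma phi_lt_two : phi < 2 := by rw [phi_eq]; exact Real.goldenRatio_lt_two
lemma irr_phi : Irrational phi := by rw [phi_eq]; exact Real.goldenRatio_irrational

/-- `aa k = ⌊k φ⌋` (lower Wythoff). -/
noncomputable def aa (k : ℕ) : ℕ := ⌊(k : ℝ) * phi⌋₊
/-- number of `a`-values `≤ t`. -/
noncomputable def uu (t : ℕ) : ℕ := aa (t+1) - (t+1)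

lemma phi_pos : 0 < phi := lt_trans one_pos phi_gt_one

lemma kphi_nonneg (k : ℕ) : (0:ℝ) ≤ k * phi :=
  mul_nonneg (Nat.cast_nonneg k) phi_pos.le

lemma aa_le (k : ℕ) : (aa k : ℝ) ≤ k * phi :=
  Nat.floor_le (kphi_nonneg k)

lemma lt_aa (k : ℕ) : (k : ℝ) * phi < aa k + 1 :=
  Nat.lt_floor_add_one _

lemma irr_k (k : ℕ) (hk : k ≠ 0) : Irrational ((k : ℝ) * phi) :=
  irr_phi.natCast_mul hk

lemma aa_lt (k : ℕ) (hk : k ≠ 0) : (aa k : ℝ) < k * phi :=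
  lt_of_le_of_ne (aa_le k) fun h => (irr_k k hk) ⟨aa k, by exact_mod_cast h⟩

lemma aa_ge (k : ℕ) : k ≤ aa k :=
  Nat.le_floor (by nlinarith [phi_gt_one, Nat.cast_nonneg (α := ℝ) k])

lemma aa_zero : aa 0 = 0 := by simp [aa]

lemma aa_one : aa 1 = 1 := by
  unfold aa
  rw [Nat.floor_eq_iff (kphi_nonneg _)]
  push_cast
  constructor <;> nlinarith [phi_gt_one, phi_lt_two]

lemma aa_two : aa 2 = 3 := by
  unfold aa
  rw [Nat.floor_eq_iff (kphi_nonneg _)]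
  have h5 : Real.sqrt 5 ^ 2 = 5 := Real.sq_sqrt (by norm_num)
  have h5p : 0 ≤ Real.sqrt 5 := Real.sqrt_nonneg 5
  unfold phi
  push_cast
  constructor <;> nlinarith

lemma aa_three : aa 3 = 4 := by
  unfold aa
  rw [Nat.floor_eq_iff (kphi_nonneg _)]
  have h5 : Real.sqrt 5 ^ 2 = 5 := Real.sq_sqrt (by norm_num)
  have h5p : 0 ≤ Real.sqrt 5 := Real.sqrt_nonneg 5
  unfold phi
  push_cast
  constructor <;> nlinarith

lemma uu_add (t : ℕ) : uu t + (t+1) = aa (t+1) := Nat.sub_add_cancel (aa_ge (t+1))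

/-- core: `aa j ≤ t ↔ j ≤ uu t`. -/
lemma le_uu_iff (j t : ℕ) : aa j ≤ t ↔ j ≤ uu t := by
  have h1 := aa_le j
  have h2 := lt_aa j
  have h3 : (aa (t+1) : ℝ) < ((t:ℝ)+1) * phi := by
    have := aa_lt (t+1) (by omega)
    push_cast at this ⊢; linarith
  have h4 : ((t:ℝ)+1) * phi < (aa (t+1) : ℝ) + 1 := by
    have := lt_aa (t+1); push_cast at this ⊢; linarith
  have hsq := phi_sq
  have hgt := phi_gt_one
  have hu := uu_add t
  constructor
  · intro h
    have hj : (j:ℝ) * phi < (t:ℝ) + 1 := by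
      have : (aa j : ℝ) ≤ t := by exact_mod_cast h
      linarith
    have key : ((j:ℝ)) + ((t:ℝ)+1) < ((t:ℝ)+1) * phi := by nlinarith
    have h5 : ((j:ℝ)) + ((t:ℝ)+1) < (aa (t+1) : ℝ) + 1 := by linarith
    have h6 : j + (t+1) < aa (t+1) + 1 := by exact_mod_cast h5
    omega
  · intro h
    have h6 : j + (t+1) ≤ aa (t+1) := by omega
    have h5 : ((j:ℝ)) + ((t:ℝ)+1) ≤ (aa (t+1) : ℝ) := by exact_mod_cast h6
    have key : ((j:ℝ)) + ((t:ℝ)+1) < ((t:ℝ)+1) * phi := lt_of_le_of_lt h5 h3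
    have hj : (j:ℝ) * phi < (t:ℝ) + 1 := by nlinarith
    have h7 : (aa j : ℝ) < (t:ℝ) + 1 := lt_of_le_of_lt h1 hj
    have h8 : aa j < t + 1 := by exact_mod_cast h7
    omega

lemma bb_le_iff (j t : ℕ) : aa j + j ≤ t ↔ j + uu t ≤ t := by
  have h1 := aa_le j
  have h2 := lt_aa j
  have h3 : (aa (t+1) : ℝ) < ((t:ℝ)+1) * phi := by
    have := aa_lt (t+1) (by omega)
    push_cast at this ⊢; linarith
  have h4 : ((t:ℝ)+1) * phi < (aa (t+1) : ℝ) + 1 := by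
    have := lt_aa (t+1); push_cast at this ⊢; linarith
  have hsq := phi_sq
  have hgt := phi_gt_one
  have hlt := phi_lt_two
  have hu := uu_add t
  constructor
  · intro h
    have hj : (j:ℝ) * phi + j < (t:ℝ) + 1 := by
      have : (aa j : ℝ) + j ≤ t := by exact_mod_cast h
      linarith
    -- j < (t+1)(2-phi), so j + (t+1)*phi < 2t+2
    have key : ((j:ℝ)) + ((t:ℝ)+1) * phi < 2*(t:ℝ) + 2 := by nlinarith
    have h5 : ((j:ℝ)) + (aa (t+1) : ℝ) < 2*(t:ℝ) + 2 := by linarith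
    have h6 : j + aa (t+1) < 2*t + 2 := by exact_mod_cast h5
    omega
  · intro h
    have h6 : j + aa (t+1) ≤ 2*t + 1 := by omega
    have h5 : ((j:ℝ)) + (aa (t+1) : ℝ) ≤ 2*(t:ℝ) + 1 := by exact_mod_cast h6
    have key : ((j:ℝ)) + ((t:ℝ)+1) * phi < 2*(t:ℝ) + 2 := by linarith
    have hj : (j:ℝ) * phi + j < (t:ℝ) + 1 := by nlinarith
    have h7 : (aa j : ℝ) + j < (t:ℝ) + 1 := by linarith
    have h8 : aa j + j < t + 1 := by exact_mod_cast h7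
    omega

lemma uu_mono {t1 t2 : ℕ} (h : t1 ≤ t2) : uu t1 ≤ uu t2 :=
  (le_uu_iff _ _).mp (le_trans ((le_uu_iff _ _).mpr le_rfl) h)

lemma aa_succ_ge (j : ℕ) : aa j + 1 ≤ aa (j+1) := by
  have h1 := aa_le j
  have hgt := phi_gt_one
  have hle : ((aa j + 1 : ℕ) : ℝ) ≤ ((j+1 : ℕ):ℝ) * phi := by push_cast; nlinarith
  exact Nat.le_floor hle

lemma aa_succ_le (j : ℕ) : aa (j+1) ≤ aa j + 2 := by
  have h1 := lt_aa j
  have h2 : (aa (j+1) : ℝ) ≤ ((j:ℝ)+1)*phi := by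
    have := aa_le (j+1); push_cast at this ⊢; linarith
  have hlt := phi_lt_two
  have : (aa (j+1) : ℝ) < (aa j : ℝ) + 3 := by nlinarith
  have h3 : aa (j+1) < aa j + 3 := by exact_mod_cast this
  omega

lemma uu_aa (j : ℕ) : uu (aa j) = j := by
  have h1 : j ≤ uu (aa j) := (le_uu_iff j (aa j)).mp le_rfl
  have h2 : ¬ (j + 1 ≤ uu (aa j)) := by
    intro h
    have := (le_uu_iff (j+1) (aa j)).mpr h
    have := aa_succ_ge j
    omega
  omega

-- PART 2
lemma beatty_disjoint (j k : ℕ) (hj : 1 ≤ j) (hk : 1 ≤ k) : aa j ≠ aa k + k := by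
  intro h
  have haj1 : (aa j : ℝ) < j * phi := aa_lt j (by omega)
  have haj2 := lt_aa j
  have hak1 : (aa k : ℝ) < k * phi := aa_lt k (by omega)
  have hak2 := lt_aa k
  have hsq := phi_sq
  have hgt := phi_gt_one
  have hcast : (aa j : ℝ) = (aa k : ℝ) + k := by exact_mod_cast h
  -- let T = aa j (real). Then T < jφ < T+1 and T - k < kφ < T - k + 1, so T < kφ² < T+1.
  -- j > T(φ-1), k > T(2-φ); j+k > T. similarly j+k < T+1.
  have hj1 : (aa j : ℝ) * (phi - 1) < (j : ℝ) := by nlinarith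
  have hj2 : (j:ℝ) < ((aa j : ℝ) + 1) * (phi - 1) := by nlinarith
  have hk0 : (aa k : ℝ) + k < (k:ℝ) * phi * phi := by nlinarith
  have hk0' : (k:ℝ) * phi * phi < (aa k : ℝ) + k + 1 := by nlinarith
  have hk1 : (aa j : ℝ) * (2 - phi) < (k : ℝ) := by nlinarith
  have hk2 : (k:ℝ) < ((aa j : ℝ) + 1) * (2 - phi) := by nlinarith
  have hsum1 : (aa j : ℝ) < (j:ℝ) + (k:ℝ) := by nlinarith
  have hsum2 : (j:ℝ) + (k:ℝ) < (aa j : ℝ) + 1 := by nlinarith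
  have hs1 : aa j < j + k := by exact_mod_cast hsum1
  have hs2 : j + k < aa j + 1 := by exact_mod_cast hsum2
  omega

lemma partition (t : ℕ) (ht : 1 ≤ t) :
    aa (uu t) = t ∨ (aa (t - uu t) + (t - uu t) = t ∧ 1 ≤ t - uu t) := by
  by_cases hA : aa (uu t) = t
  · exact Or.inl hA
  right
  have hj1 : aa (uu t) ≤ t := (le_uu_iff (uu t) t).mpr le_rfl
  have hj2 : ¬ aa (uu t + 1) ≤ t := by
    intro h
    have := (le_uu_iff (uu t + 1) t).mp h
    omega
  set j := uu t with hjdef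
  have hjle : j ≤ aa j := aa_ge j
  have hka : 1 ≤ t - j := by omega
  set k := t - j with hkdef
  have hkt : k + j = t := by omega
  -- real facts
  have h1 : (j:ℝ) * phi < (aa j : ℝ) + 1 := lt_aa j
  have h2 : (aa j : ℝ) ≤ (j:ℝ) * phi := aa_le j
  have h3 : (t:ℝ) + 1 ≤ (aa (j+1) : ℝ) := by
    have : t + 1 ≤ aa (j+1) := by omega
    exact_mod_cast this
  have h4 : (aa (j+1) : ℝ) < ((j:ℝ)+1) * phi := by
    have := aa_lt (j+1) (by omega); push_cast at this ⊢; linarith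
  have h5 : (aa j : ℝ) ≤ (t:ℝ) - 1 := by
    have : aa j ≤ t - 1 := by omega
    have h6 : (aa j : ℝ) ≤ ((t-1 : ℕ) : ℝ) := by exact_mod_cast this
    have h7 : ((t-1:ℕ):ℝ) = (t:ℝ) - 1 := by
      have : ((t-1:ℕ):ℝ) + 1 = (t:ℝ) := by exact_mod_cast Nat.succ_pred_eq_of_pos ht
      linarith
    linarith
  have hsq := phi_sq
  have hgt := phi_gt_one
  -- jφ < t and (j+1)φ > t+1
  have hjp : (j:ℝ) * phi < (t:ℝ) := by linarith
  have hjp2 : (t:ℝ) + 1 < ((j:ℝ)+1) * phi := by linarith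
  -- goal: aa k = j, i.e. j ≤ kφ < j+1
  have hklow : (j:ℝ) < (k:ℝ) * phi := by
    have hkr : (k:ℝ) = (t:ℝ) - (j:ℝ) := by
      have := hkt; push_cast [← this]; ring
    rw [hkr]
    nlinarith
  have hkhigh : (k:ℝ) * phi < (j:ℝ) + 1 := by
    have hkr : (k:ℝ) = (t:ℝ) - (j:ℝ) := by
      have := hkt; push_cast [← this]; ring
    rw [hkr]
    nlinarith
  have haak : aa k = j := by
    unfold aa
    rw [Nat.floor_eq_iff (kphi_nonneg _)]
    exact ⟨hklow.le, by push_cast; linarith⟩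
  constructor
  · omega
  · exact hka

lemma comp1 (j : ℕ) (hj : 1 ≤ j) : aa (aa j) + 1 = aa j + j := by
  have h1 : (aa j : ℝ) < j * phi := aa_lt j (by omega)
  have h2 := lt_aa j
  have hsq := phi_sq
  have hgt := phi_gt_one
  -- aa j * phi ∈ (aa j + j - 1, aa j + j)
  have hlow : (aa j : ℝ) + j - 1 < (aa j : ℝ) * phi := by nlinarith
  have hhigh : (aa j : ℝ) * phi < (aa j : ℝ) + j := by nlinarith
  have hup : aa (aa j) < aa j + j := by
    have : (aa (aa j) : ℝ) ≤ (aa j : ℝ) * phi := aa_le (aa j)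
    have h3 : (aa (aa j) : ℝ) < ((aa j + j : ℕ) : ℝ) := by push_cast; linarith
    exact_mod_cast h3
  have hdown : aa j + j ≤ aa (aa j) + 1 := by
    have h3 : ((aa j + j - 1 : ℕ) : ℝ) ≤ (aa j : ℝ) * phi := by
      have hc : ((aa j + j - 1 : ℕ) : ℝ) = (aa j : ℝ) + j - 1 := by
        have : 1 ≤ aa j + j := by omega
        push_cast [Nat.cast_sub this]; ring
      rw [hc]; linarith
    have := Nat.le_floor h3
    have h4 : aa j + j - 1 ≤ aa (aa j) := this
    omega
  omega

lemma comp2 (k : ℕ) (hk : 1 ≤ k) : aa (aa k + k) = 2 * aa k + k := by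
  have h1 : (aa k : ℝ) < k * phi := aa_lt k (by omega)
  have h2 := lt_aa k
  have hsq := phi_sq
  have hgt := phi_gt_one
  have hlt := phi_lt_two
  -- (aa k + k) * phi ∈ (2 aa k + k, 2 aa k + k + 1)
  have hlow : 2 * (aa k : ℝ) + k < ((aa k : ℝ) + k) * phi := by nlinarith
  have hhigh : ((aa k : ℝ) + k) * phi < 2 * (aa k : ℝ) + k + 1 := by nlinarith
  set T := aa k with hT
  unfold aa
  rw [Nat.floor_eq_iff (kphi_nonneg _)]
  constructor
  · push_cast; linarith
  · push_cast; linarith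

lemma gapA (n : ℕ) (hn : 1 ≤ n) (hA : aa (uu n) = n) : aa (n+1) = aa n + 2 := by
  set j := uu n with hjdef
  have hj : 1 ≤ j := by
    have : aa 1 ≤ n := by rw [aa_one]; omega
    have := (le_uu_iff 1 n).mp this
    omega
  have h1 : (aa j : ℝ) < j * phi := aa_lt j (by omega)
  have h2 := lt_aa j
  have hsq := phi_sq
  have hgt := phi_gt_one
  have hlt := phi_lt_two
  -- (n+1)*phi = (aa j + 1)*phi ∈ (aa j + j + 1, aa j + j + 2)
  have hlow : (aa j : ℝ) + j + 1 < ((aa j : ℝ) + 1) * phi := by nlinarith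
  have hhigh : ((aa j : ℝ) + 1) * phi < (aa j : ℝ) + j + 2 := by nlinarith
  have hcomp := comp1 j hj
  set T := aa j with hT
  have hfloor : aa (T + 1) = T + j + 1 := by
    unfold aa
    rw [Nat.floor_eq_iff (kphi_nonneg _)]
    constructor
    · push_cast; linarith
    · push_cast; linarith
  rw [hA] at hfloor hcomp
  omega

lemma gapB (n k : ℕ) (hk : 1 ≤ k) (hB : aa k + k = n) : aa (n+1) = aa n + 1 := by
  have h1 : (aa k : ℝ) < k * phi := aa_lt k (by omega)
  have h2 := lt_aa k
  have hsq := phi_sq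
  have hgt := phi_gt_one
  have hlt := phi_lt_two
  have hlow : 2 * (aa k : ℝ) + k + 1 < ((aa k : ℝ) + k + 1) * phi := by nlinarith
  have hhigh : ((aa k : ℝ) + k + 1) * phi < 2 * (aa k : ℝ) + k + 2 := by nlinarith
  have hcomp := comp2 k hk
  set T := aa k with hT
  have hfloor : aa (T + k + 1) = 2 * T + k + 1 := by
    unfold aa
    rw [Nat.floor_eq_iff (kphi_nonneg _)]
    constructor
    · push_cast; linarith
    · push_cast; linarith
  rw [hB] at hfloor hcomp
  omega

lemma uu_bb (k : ℕ) (hk : 1 ≤ k) : uu (aa k + k) = aa k := by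
  have h1 := gapB (aa k + k) k hk rfl
  have h2 := comp2 k hk
  have h3 := uu_add (aa k + k)
  omega

lemma aa_mono {j k : ℕ} (h : j ≤ k) : aa j ≤ aa k := by
  induction k with
  | zero => have : j = 0 := by omega
            subst this; omega
  | succ k ih =>
    rcases Nat.lt_succ_iff_lt_or_eq.mp (Nat.lt_succ_of_le h) with h2 | h2
    · have := ih (by omega)
      have := aa_succ_ge k
      omega
    · subst h2; omega

lemma aa_smono {j k : ℕ} (h : j < k) : aa j + 1 ≤ aa k := by
  have h1 : j + 1 ≤ k := h
  have := aa_succ_ge j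
  have := aa_mono h1
  omega

/-- no two consecutive upper-Wythoff numbers -/
lemma noBB (m j k : ℕ) (hj : 1 ≤ j) (hk : 1 ≤ k) (h1 : aa j + j = m) (h2 : aa k + k = m + 1) :
    False := by
  rcases lt_trichotomy j k with h | h | h
  · have := aa_smono h; omega
  · subst h; omega
  · have := aa_smono h; omega

/-- gap sum: `aa (n+2) ≥ aa n + 3` -/
lemma F1 (n : ℕ) : aa n + 3 ≤ aa (n+2) := by
  rcases Nat.eq_zero_or_pos n with h | h
  · subst h; rw [aa_zero, aa_two]
  have g1 := aa_succ_ge n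
  have g2 : aa (n+1) + 1 ≤ aa (n+2) := aa_succ_ge (n+1)
  have g1' := aa_succ_le n
  have g2' : aa (n+2) ≤ aa (n+1) + 2 := aa_succ_le (n+1)
  by_contra hc
  -- then both gaps are 1, so n and n+1 both in B
  have hgap1 : aa (n+1) = aa n + 1 := by omega
  have hgap2 : aa (n+2) = aa (n+1) + 1 := by omega
  have hBn : aa (n - uu n) + (n - uu n) = n ∧ 1 ≤ n - uu n := by
    rcases partition n h with hA | hB
    · have := gapA n h hA; omega
    · exact hB
  have hBn1 : aa ((n+1) - uu (n+1)) + ((n+1) - uu (n+1)) = n+1 ∧ 1 ≤ (n+1) - uu (n+1) := by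
    rcases partition (n+1) (by omega) with hA | hB
    · have h9 : aa (n+2) = aa (n+1) + 2 := gapA (n+1) (by omega) hA
      omega
    · exact hB
  exact noBB n _ _ hBn.2 hBn1.2 hBn.1 hBn1.1

-- PART 3
lemma aa_four : aa 4 = 6 := by
  unfold aa
  rw [Nat.floor_eq_iff (kphi_nonneg _)]
  have h5 : Real.sqrt 5 ^ 2 = 5 := Real.sq_sqrt (by norm_num)
  have h5p : 0 ≤ Real.sqrt 5 := Real.sqrt_nonneg 5
  unfold phi
  push_cast
  constructor <;> nlinarith

lemma aa_le_two (k : ℕ) : aa k ≤ 2 * k := by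
  have h1 := lt_aa k
  have hlt := phi_lt_two
  have hk := Nat.cast_nonneg (α := ℝ) k
  have : (aa k : ℝ) < 2 * (k:ℝ) + 1 := by nlinarith [aa_le k]
  have h2 : (aa k : ℝ) < ((2*k+1 : ℕ) : ℝ) := by push_cast; linarith
  have h3 : aa k < 2*k+1 := by exact_mod_cast h2
  omega

/-- the conjectured closed form of the Hurt-Sada array -/
noncomputable def DD (n x : ℕ) : ℕ :=
  if aa n - n < x ∧ x < aa (n+1) then
    (if aa (uu (x+n+2)) = x+n+2 then uu (x+n+2) - 1 else (x+n+2) - uu (x+n+2) - 1)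
  else x

lemma DD_out {n x : ℕ} (h : x ≤ aa n - n ∨ aa (n+1) ≤ x) : DD n x = x := by
  unfold DD
  rw [if_neg]
  rintro ⟨h1, h2⟩
  omega

lemma DD_in {n x : ℕ} (h1 : aa n - n < x) (h2 : x < aa (n+1)) :
    DD n x = if aa (uu (x+n+2)) = x+n+2 then uu (x+n+2) - 1
             else (x+n+2) - uu (x+n+2) - 1 := by
  unfold DD
  rw [if_pos ⟨h1, h2⟩]

lemma DD_in_A {n x j : ℕ} (h1 : aa n - n < x) (h2 : x < aa (n+1))
    (ht : x + n + 2 = aa j) : DD n x = j - 1 := by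
  rw [DD_in h1 h2, ht, uu_aa j, if_pos rfl]

lemma DD_in_B {n x k : ℕ} (hk : 1 ≤ k) (h1 : aa n - n < x) (h2 : x < aa (n+1))
    (ht : x + n + 2 = aa k + k) : DD n x = k - 1 := by
  rw [DD_in h1 h2, ht, uu_bb k hk,
      if_neg (beatty_disjoint (aa k) k (le_trans hk (aa_ge k)) hk)]
  have := aa_ge k
  omega

lemma uu_pos {t : ℕ} (ht : 1 ≤ t) : 1 ≤ uu t := by
  have : aa 1 ≤ t := by rw [aa_one]; omega
  exact (le_uu_iff 1 t).mp this

lemma DD_at_P (n : ℕ) : DD n (aa (n+2) - (n+2)) = n + 1 := by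
  have ha0 := aa_zero; have ha1 := aa_one; have ha2 := aa_two
  have hge2 : n + 2 ≤ aa (n+2) := aa_ge (n+2)
  have hgen : n ≤ aa n := aa_ge n
  have hF := F1 n
  have hg2' : aa (n+2) ≤ aa (n+1) + 2 := aa_succ_le (n+1)
  have hg1 : aa n + 1 ≤ aa (n+1) := aa_succ_ge n
  rcases Nat.eq_zero_or_pos n with hn0 | hn0
  · subst hn0
    have e1 : aa (0+2) = 3 := ha2
    have e2 : aa (0+1) = 1 := ha1
    rw [DD_out (Or.inr (by omega))]
    omega
  · rw [DD_in_A (by omega) (by omega) (by omega : aa (n+2) - (n+2) + n + 2 = aa (n+2))]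
    have := uu_aa (n+2)
    omega

lemma DD_lt_P (n i : ℕ) (hi : i < aa (n+2) - (n+2)) : DD n i ≠ n + 1 := by
  have ha0 := aa_zero; have ha1 := aa_one
  have hge2 : n + 2 ≤ aa (n+2) := aa_ge (n+2)
  have hgen : n ≤ aa n := aa_ge n
  have hle2 : aa n ≤ 2 * n := aa_le_two n
  have hF := F1 n
  have hg2' : aa (n+2) ≤ aa (n+1) + 2 := aa_succ_le (n+1)
  have hg1 : aa n + 1 ≤ aa (n+1) := aa_succ_ge n
  by_cases hw : aa n - n < i ∧ i < aa (n+1)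
  · rw [DD_in hw.1 hw.2]
    set t := i + n + 2 with htdef
    have htlt : t < aa (n+2) := by omega
    split
    · -- A branch: value uu t - 1 = n+1 would need aa (n+2) ≤ t
      intro hc
      have h4 : n + 2 ≤ uu t := by omega
      have := (le_uu_iff (n+2) t).mpr h4
      omega
    · intro hc
      have h4 : (n+2) + uu t ≤ t := by omega
      have := (bb_le_iff (n+2) t).mpr h4
      omega
  · rw [DD_out (by omega)]
    omega

lemma sinf (n : ℕ) : sInf {i | DD n i = n + 1} = aa (n+2) - (n+2) := by
  have hmem : aa (n+2) - (n+2) ∈ {i | DD n i = n + 1} := DD_at_P n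
  refine le_antisymm (Nat.sInf_le hmem) (le_csInf ⟨_, hmem⟩ ?_)
  intro i hi
  by_contra hc
  push_neg at hc
  exact DD_lt_P n i hc hi

/-- the main step lemma -/
lemma main (n x : ℕ) :
    (if x < aa (n+2) - (n+2) then DD n x
     else if x < aa (n+2) - (n+2) + (n+1) then DD n (x+1)
     else if x = aa (n+2) - (n+2) + (n+1) then n + 1
     else DD n x) = DD (n+1) x := by
  have ha0 := aa_zero; have ha1 := aa_one; have ha2 := aa_two; have ha3 := aa_three
  have hge_n : n ≤ aa n := aa_ge n
  have hge_n1 : n + 1 ≤ aa (n+1) := aa_ge (n+1)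
  have hge_n2 : n + 2 ≤ aa (n+2) := aa_ge (n+2)
  have hge_n3 : n + 3 ≤ aa (n+3) := aa_ge (n+3)
  have hg1 : aa n + 1 ≤ aa (n+1) := aa_succ_ge n
  have hg1' : aa (n+1) ≤ aa n + 2 := aa_succ_le n
  have hg2 : aa (n+1) + 1 ≤ aa (n+2) := aa_succ_ge (n+1)
  have hg2' : aa (n+2) ≤ aa (n+1) + 2 := aa_succ_le (n+1)
  have hg3 : aa (n+2) + 1 ≤ aa (n+3) := aa_succ_ge (n+2)
  have hg3' : aa (n+3) ≤ aa (n+2) + 2 := aa_succ_le (n+2)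
  have hF1 : aa n + 3 ≤ aa (n+2) := F1 n
  have hid1 : aa (n+1+1) = aa (n+2) := rfl
  by_cases hx1 : x < aa (n+2) - (n+2)
  · rw [if_pos hx1]
    by_cases hxq : x ≤ aa n - n
    · rw [DD_out (n := n) (Or.inl hxq), DD_out (n := n+1) (Or.inl (by omega))]
    · -- q n < x < P : forces x = q n + 1, both gaps 2
      have hx : x = aa n - n + 1 := by omega
      have hgap1 : aa (n+1) = aa n + 2 := by omega
      have hgap2 : aa (n+2) = aa (n+1) + 2 := by omega
      have hA1 : aa (uu (n+1)) = n + 1 := by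
        rcases partition (n+1) (by omega) with h | ⟨h, hk⟩
        · exact h
        · exfalso
          have h9 : aa (n+2) = aa (n+1) + 1 := gapB (n+1) _ hk h
          omega
      have hj' : 1 ≤ uu (n+1) := uu_pos (by omega)
      have hcomp := comp1 (uu (n+1)) hj'
      rw [hA1] at hcomp
      have ht : x + n + 2 = aa (uu (n+1)) + uu (n+1) := by rw [hA1]; omega
      rw [DD_in_B hj' (by omega) (by omega) ht,
          DD_out (n := n+1) (Or.inl (by omega))]
      omega
  · rw [if_neg hx1]
    by_cases hx2 : x < aa (n+2) - (n+2) + (n+1)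
    · rw [if_pos hx2]
      by_cases hxq' : aa (n+1) - (n+1) < x
      · -- x in window of row n+1
        by_cases hxa : x + 1 < aa (n+1)
        · -- both windows, same value
          rw [DD_in (n := n) (by omega) hxa, DD_in (n := n+1) hxq' (by omega)]
          rw [show x + 1 + n + 2 = x + n + 3 by omega,
              show x + (n+1) + 2 = x + n + 3 by omega]
        · -- x+1 beyond row-n window
          push_neg at hxa
          set t := x + n + 3 with htdef
          have hbb1 : (n+1) + uu t ≤ t := (bb_le_iff (n+1) t).mp (by omega)
          have hbb2 : ¬ (aa (n+2) + (n+2) ≤ t) := by omega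
          have hbb3 : ¬ ((n+2) + uu t ≤ t) := fun h => hbb2 ((bb_le_iff (n+2) t).mpr h)
          have hsub : t - uu t = n + 1 := by omega
          have hA : aa (uu t) = t := by
            rcases partition t (by omega) with h | ⟨h, hk⟩
            · exact h
            · exfalso
              rw [hsub] at h
              omega
          rw [DD_out (n := n) (Or.inr (by omega)),
              DD_in_A (n := n+1) hxq' (by omega) (by omega : x + (n+1) + 2 = aa (uu t))]
          omega
      · -- x = q(n+1) = P, gap2 = 1
        push_neg at hxq'
        have hxP : x = aa (n+1) - (n+1) := by omega
        have hgap2 : aa (n+2) = aa (n+1) + 1 := by omega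
        rcases Nat.eq_zero_or_pos n with hn0 | hn0
        · exfalso
          subst hn0
          have e1 : aa (0+2) = 3 := ha2
          have e2 : aa (0+1) = 1 := ha1
          omega
        have hB1 : aa ((n+1) - uu (n+1)) + ((n+1) - uu (n+1)) = n+1 ∧ 1 ≤ (n+1) - uu (n+1) := by
          rcases partition (n+1) (by omega) with h | h
          · exfalso
            have h9 : aa (n+2) = aa (n+1) + 2 := gapA (n+1) (by omega) h
            omega
          · exact h
        have hA2 : aa (uu (n+2)) = n + 2 := by
          rcases partition (n+2) (by omega) with h | ⟨h, hk⟩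
          · exact h
          · exact absurd h (fun hcon => noBB (n+1) _ _ hB1.2 hk hB1.1 hcon)
        have hj2 : 1 ≤ uu (n+2) := uu_pos (by omega)
        have hcomp2 := comp1 (uu (n+2)) hj2
        rw [hA2] at hcomp2
        have ht : (x + 1) + n + 2 = aa (uu (n+2)) + uu (n+2) := by rw [hA2]; omega
        rw [DD_in_B hj2 (by omega) (by omega) ht,
            DD_out (n := n+1) (Or.inl (by omega))]
        omega
    · rw [if_neg hx2]
      by_cases hx3 : x = aa (n+2) - (n+2) + (n+1)
      · rw [if_pos hx3]
        have ht : x + (n+1) + 2 = aa (n+2) + (n+2) := by omega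
        rw [DD_in_B (by omega) (by omega) (by omega) ht]
        omega
      · rw [if_neg hx3]
        have hx4 : aa (n+2) ≤ x := by omega
        rw [DD_out (n := n) (Or.inr (by omega)), DD_out (n := n+1) (Or.inr (by omega))]

lemma rowEq : ∀ n x, A n x = DD n x := by
  intro n
  induction n with
  | zero =>
    intro x
    have h0 : A 0 x = x := rfl
    have e2 : aa (0+1) = 1 := aa_one
    have e0 : aa 0 = 0 := aa_zero
    rw [h0]
    rcases Nat.eq_zero_or_pos x with h | h
    · rw [DD_out (Or.inl (by omega))]
    · rw [DD_out (Or.inr (by omega))]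
  | succ n ih =>
    intro x
    have hset : {i | A n i = n + 1} = {i | DD n i = n + 1} := by
      ext i
      simp only [Set.mem_setOf_eq, ih i]
    show (if x < sInf {i | A n i = n + 1} then A n x
          else if x < sInf {i | A n i = n + 1} + (n + 1) then A n (x + 1)
          else if x = sInf {i | A n i = n + 1} + (n + 1) then n + 1
          else A n x) = DD (n+1) x
    rw [hset, sinf n, ih x, ih (x+1)]
    exact main n x

lemma p_eq (n : ℕ) : p (n+1) = aa (n+2) - (n+2) := by
  unfold p
  simp only [Nat.add_sub_cancel]
  have hset : {i | A n i = n + 1} = {i | DD n i = n + 1} := by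
    ext i
    simp only [Set.mem_setOf_eq, rowEq n i]
  rw [hset, sinf n]

lemma s_closed (n : ℕ) :
    DD n (aa (n+2) - (n+2) + 1) = if aa (uu (n+2)) = n+2 then uu (n+1) else n+2 := by
  have ha0 := aa_zero; have ha1 := aa_one; have ha2 := aa_two
  have ha3 := aa_three; have ha4 := aa_four
  have hge_n : n ≤ aa n := aa_ge n
  have hge_n1 : n + 1 ≤ aa (n+1) := aa_ge (n+1)
  have hge_n2 : n + 2 ≤ aa (n+2) := aa_ge (n+2)
  have hge_n3 : n + 3 ≤ aa (n+3) := aa_ge (n+3)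
  have hg1 : aa n + 1 ≤ aa (n+1) := aa_succ_ge n
  have hg1' : aa (n+1) ≤ aa n + 2 := aa_succ_le n
  have hg2 : aa (n+1) + 1 ≤ aa (n+2) := aa_succ_ge (n+1)
  have hg2' : aa (n+2) ≤ aa (n+1) + 2 := aa_succ_le (n+1)
  have hg3 : aa (n+2) + 1 ≤ aa (n+3) := aa_succ_ge (n+2)
  have hg3' : aa (n+3) ≤ aa (n+2) + 2 := aa_succ_le (n+2)
  have hF1 : aa n + 3 ≤ aa (n+2) := F1 n
  have huadd1 : uu (n+1) + (n+2) = aa (n+2) := uu_add (n+1)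
  have huadd2 : uu (n+2) + (n+3) = aa (n+3) := uu_add (n+2)
  rcases Nat.eq_zero_or_pos n with hn0 | hn0
  · subst hn0
    have e1 : aa (0+2) = 3 := ha2
    have e2 : aa (0+1) = 1 := ha1
    have e3 : aa (0+3) = 4 := ha3
    have e4 : uu (0+2) + (0+3) = aa (0+3) := uu_add (0+2)
    have e5 : uu (0+1) + (0+2) = aa (0+2) := uu_add (0+1)
    rw [DD_out (Or.inr (by omega))]
    rw [if_neg]
    · omega
    · intro hc
      rw [show (0+2 : ℕ) = 2 from rfl] at hc
      have : uu 2 = 1 := by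
        have := uu_add 2
        rw [aa_three] at this
        omega
      rw [this, aa_one] at hc
      omega
  -- n ≥ 1
  have hwin1 : aa n - n < aa (n+2) - (n+2) + 1 := by omega
  have hwin2 : aa (n+2) - (n+2) + 1 < aa (n+1) := by
    rcases Nat.eq_or_lt_of_le hn0 with h1 | h1
    · -- n = 1 : need aa 3 - 3 + 1 < aa 2, i.e. 2 < 3
      have h2 : n = 1 := h1.symm
      subst h2
      have e1 : aa (1+2) = 4 := ha3
      have e2 : aa (1+1) = 3 := ha2
      omega
    · omega
  rcases partition (n+2) (by omega) with hA | ⟨hB, hk⟩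
  · rw [if_pos hA]
    have hj2 : 1 ≤ uu (n+2) := uu_pos (by omega)
    have hcomp := comp1 (uu (n+2)) hj2
    rw [hA] at hcomp
    have ht : (aa (n+2) - (n+2) + 1) + n + 2 = aa (uu (n+2)) + uu (n+2) := by
      rw [hA]; omega
    rw [DD_in_B hj2 hwin1 hwin2 ht]
    have hgap : aa (n+2+1) = aa (n+2) + 2 := gapA (n+2) (by omega) hA
    have hgap' : aa (n+3) = aa (n+2) + 2 := hgap
    omega
  · have hnotA : ¬ (aa (uu (n+2)) = n+2) := by
      intro hc
      exact beatty_disjoint (uu (n+2)) ((n+2) - uu (n+2)) (uu_pos (by omega)) hk (by omega)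
    rw [if_neg hnotA]
    have hgap : aa (n+2+1) = aa (n+2) + 1 := gapB (n+2) _ hk hB
    have hgap' : aa (n+3) = aa (n+2) + 1 := hgap
    have ht : (aa (n+2) - (n+2) + 1) + n + 2 = aa (n+3) := by omega
    rw [DD_in_A hwin1 hwin2 ht]
    omega

lemma s_eq (n : ℕ) (hn : 1 ≤ n) :
    s n = if aa (uu (n+1)) = n+1 then uu n else n+1 := by
  obtain ⟨m, rfl⟩ : ∃ m, n = m + 1 := ⟨n-1, by omega⟩
  unfold s
  rw [p_eq m]
  have h1 : A (m + 1 - 1) (aa (m+2) - (m+2) + 1) = DD m (aa (m+2) - (m+2) + 1) := by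
    rw [show m + 1 - 1 = m from rfl, rowEq]
  rw [h1, s_closed m]

-- PART 5
lemma floor_phisq (k : ℕ) : ⌊(k : ℝ) * phi ^ 2⌋₊ = aa k + k := by
  rw [phi_sq, mul_add, mul_one]
  exact Nat.floor_add_natCast (kphi_nonneg k) k

theorem sada_value_twice_iff (m : ℕ) :
    (∃ i j : ℕ, 1 ≤ i ∧ i < j ∧ s i = m ∧ s j = m) ↔
      ∃ k : ℕ, 1 ≤ k ∧ m = ⌊(k : ℝ) * phi ^ 2⌋₊ := by
  constructor
  · rintro ⟨i, j, hi, hij, hsi, hsj⟩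
    rw [s_eq i hi] at hsi
    rw [s_eq j (by omega)] at hsj
    by_cases hAi : aa (uu (i+1)) = i+1
    · by_cases hAj : aa (uu (j+1)) = j+1
      · exfalso
        rw [if_pos hAi] at hsi
        rw [if_pos hAj] at hsj
        have hg' : aa (i+2) = aa (i+1) + 2 := gapA (i+1) (by omega) hAi
        have u1 : uu i + (i+1) = aa (i+1) := uu_add i
        have u2 : uu (i+1) + (i+2) = aa (i+2) := uu_add (i+1)
        have h2 : uu (i+1) ≤ uu j := uu_mono (by omega)
        omega
      · rw [if_neg hAj] at hsj
        rcases partition (j+1) (by omega) with h | ⟨h, hk⟩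
        · exact absurd h hAj
        refine ⟨(j+1) - uu (j+1), hk, ?_⟩
        rw [floor_phisq]
        omega
    · rw [if_neg hAi] at hsi
      rcases partition (i+1) (by omega) with h | ⟨h, hk⟩
      · exact absurd h hAi
      refine ⟨(i+1) - uu (i+1), hk, ?_⟩
      rw [floor_phisq]
      omega
  · rintro ⟨k, hk, hm⟩
    rw [floor_phisq] at hm
    have hm2 : 2 ≤ m := by have := aa_ge k; omega
    have hgap : aa (m+1) = aa m + 1 := gapB m k hk hm.symm
    have hgam : m ≤ aa m := aa_ge m
    refine ⟨m - 1, aa m, by omega, by omega, ?_, ?_⟩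
    · rw [s_eq (m-1) (by omega)]
      have e1 : m - 1 + 1 = m := by omega
      rw [e1]
      have hne : ¬ (aa (uu m) = m) := fun hc =>
        beatty_disjoint (uu m) k (uu_pos (by omega)) hk (by omega)
      rw [if_neg hne]
    · rw [s_eq (aa m) (by omega)]
      have e2 : aa m + 1 = aa (m+1) := hgap.symm
      rw [e2, if_pos (by rw [uu_aa])]
      exact uu_aa m
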